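/- The Jacobian determinant of $(z_1,\ldots,z_d)$ with respect to $(t_1,\ldots,t_d)$ satisfies $\det\big[\frac{\partial(z_1,\ldots,z_d)}{\partial(t_1,\ldots,t_d)}\big] = \prod_{k=1}^d \frac{2\pi i}{\binom{d+1}{k}} \cdot \prod_{1 \le \mu < \nu \le d+1}\big(e^{2\pi i t_\mu} - e^{2\pi i t_\nu}\big)$, where $t_{d+1} = -(t_1 + \cdots + t_d)$. -/

import Mathlib

open Real Complex

/-- `z_k` (for `k = 1, …, d`, here 0-indexed) as a function of the free variables
`t_1, …, t_d`, with `t_{d+1} = -(t_1 + ⋯ + t_d)`: the normalized `k`-th elementary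
symmetric polynomial of `e^{2πi t_1}, …, e^{2πi t_{d+1}}`. -/
noncomputable def zFun (d : ℕ) (k : Fin d) (s : Fin d → ℝ) : ℂ :=
  (1 / (Nat.choose (d + 1) ((k : ℕ) + 1) : ℂ)) *
    ∑ J ∈ (Finset.univ : Finset (Fin (d + 1))).powersetCard ((k : ℕ) + 1),
      Complex.exp (2 * π * Complex.I *
        ((∑ j ∈ J, (Fin.snoc s (-(∑ i, s i)) : Fin (d + 1) → ℝ) j : ℝ) : ℂ))

namespace JacAux

variable {n : ℕ}

/-- Elementary symmetric sum of `w` over subsets of `t` of size `m`. -/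
noncomputable def esm (w : Fin n → ℂ) (t : Finset (Fin n)) (m : ℕ) : ℂ :=
  ∑ J ∈ t.powersetCard m, ∏ j ∈ J, w j

lemma esm_insert (w : Fin n → ℂ) {a : Fin n} {t : Finset (Fin n)} (ha : a ∉ t) (m : ℕ) :
    esm w (insert a t) (m + 1) = esm w t (m + 1) + w a * esm w t m := by
  rw [esm, Finset.powersetCard_succ_insert ha, Finset.sum_union, esm, esm, Finset.sum_image,
    Finset.mul_sum]
  · congr 1
    refine Finset.sum_congr rfl fun J hJ => ?_
    have haJ : a ∉ J := fun h => ha ((Finset.mem_powersetCard.mp hJ).1 h)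
    rw [Finset.prod_insert haJ]
  · intro x hx y hy hxy
    have hax : a ∉ x := fun h => ha ((Finset.mem_powersetCard.mp hx).1 h)
    have hay : a ∉ y := fun h => ha ((Finset.mem_powersetCard.mp hy).1 h)
    have := congrArg (Finset.erase · a) hxy
    simpa [Finset.erase_insert, hax, hay] using this
  · rw [Finset.disjoint_right]
    intro J hJ hJ'
    obtain ⟨K, hK, rfl⟩ := Finset.mem_image.mp hJ
    exact ha ((Finset.mem_powersetCard.mp hJ').1 (Finset.mem_insert_self a K))

lemma esm_rec (w : Fin n → ℂ) {a : Fin n} {t : Finset (Fin n)} (ha : a ∈ t) (m : ℕ) :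
    esm w t (m + 1) = esm w (t.erase a) (m + 1) + w a * esm w (t.erase a) m := by
  conv_lhs => rw [← Finset.insert_erase ha]
  exact esm_insert w (Finset.notMem_erase a t) m

lemma filter_not_mem_powersetCard (a : Fin n) (t : Finset (Fin n)) (m : ℕ) :
    (t.powersetCard m).filter (fun J => a ∉ J) = (t.erase a).powersetCard m := by
  ext J
  simp only [Finset.mem_filter, Finset.mem_powersetCard, Finset.subset_erase]
  tauto

lemma sum_indicator (w : Fin n → ℂ) (a : Fin n) (m : ℕ) :
    ∑ J ∈ (Finset.univ : Finset (Fin n)).powersetCard (m + 1),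
        (if a ∈ J then (1:ℂ) else 0) * ∏ j ∈ J, w j
      = w a * esm w (Finset.univ.erase a) m := by
  classical
  simp only [ite_mul, one_mul, zero_mul]
  rw [← Finset.sum_filter]
  have h1 := Finset.sum_filter_add_sum_filter_not
    ((Finset.univ : Finset (Fin n)).powersetCard (m + 1)) (fun J => a ∈ J)
    (fun J => ∏ j ∈ J, w j)
  rw [filter_not_mem_powersetCard] at h1
  have h2 : esm w (Finset.univ : Finset (Fin n)) (m + 1)
      = esm w (Finset.univ.erase a) (m + 1) + w a * esm w (Finset.univ.erase a) m :=
    esm_rec w (Finset.mem_univ a) m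
  simp only [esm] at h2 ⊢
  linear_combination h1 + h2

lemma mul_esm_erase (w : Fin n → ℂ) (a : Fin n) (m : ℕ) :
    w a * esm w (Finset.univ.erase a) m
      = ∑ r ∈ Finset.range (m + 1), (-1) ^ r * esm w Finset.univ (m - r) * w a ^ (r + 1) := by
  induction m with
  | zero => simp [esm, Finset.powersetCard_zero]
  | succ m ih =>
    have h2 : esm w (Finset.univ : Finset (Fin n)) (m + 1)
        = esm w (Finset.univ.erase a) (m + 1) + w a * esm w (Finset.univ.erase a) m :=
      esm_rec w (Finset.mem_univ a) m
    have key : w a * esm w (Finset.univ.erase a) (m + 1)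
        = esm w Finset.univ (m + 1) * w a - w a * (w a * esm w (Finset.univ.erase a) m) := by
      rw [h2]; ring
    rw [key, ih,
      Finset.sum_range_succ' (fun r => (-1) ^ r * esm w Finset.univ (m + 1 - r) * w a ^ (r + 1))]
    have hpt : ∀ r ∈ Finset.range (m + 1),
        (-1 : ℂ) ^ (r + 1) * esm w Finset.univ (m + 1 - (r + 1)) * w a ^ (r + 1 + 1)
          = -(w a * ((-1) ^ r * esm w Finset.univ (m - r) * w a ^ (r + 1))) := by
      intro r _
      have hh : m + 1 - (r + 1) = m - r := by omega
      rw [hh]; ring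
    rw [Finset.sum_congr rfl hpt, Finset.sum_neg_distrib, Finset.mul_sum]
    simp only [Nat.sub_zero, pow_zero, one_mul, pow_one]
    ring

lemma prod_pairs {m : ℕ} (f : Fin m → Fin m → ℂ) :
    ∏ p ∈ Finset.univ.filter (fun p : Fin m × Fin m => p.1 < p.2), f p.1 p.2
      = ∏ i : Fin m, ∏ j ∈ Finset.Ioi i, f i j := by
  rw [Finset.prod_sigma']
  refine Finset.prod_bij' (fun p _ => (⟨p.1, p.2⟩ : Σ _ : Fin m, Fin m))
    (fun x _ => (x.1, x.2)) ?_ ?_ ?_ ?_ ?_ <;>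
    simp [Finset.mem_sigma, Finset.mem_Ioi]

section Det

variable (d : ℕ) (w : Fin (d + 1) → ℂ)

/-- Lower-triangular matrix of signed elementary symmetric sums. -/
noncomputable def Lmat : Matrix (Fin d) (Fin d) ℂ :=
  Matrix.of fun k r => if (r : ℕ) ≤ (k : ℕ) then (-1) ^ (r : ℕ) * esm w Finset.univ (k - r) else 0

/-- Differences of powers. -/
noncomputable def Bmat : Matrix (Fin d) (Fin d) ℂ :=
  Matrix.of fun r l => w (Fin.castSucc l) ^ ((r : ℕ) + 1) - w (Fin.last d) ^ ((r : ℕ) + 1)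

lemma det_Lmat : (Lmat d w).det = ∏ k : Fin d, (-1 : ℂ) ^ (k : ℕ) := by
  rw [Matrix.det_of_lowerTriangular]
  · refine Finset.prod_congr rfl fun k _ => ?_
    simp [Lmat, esm]
  · intro i j hij
    have h : i < j := hij
    simp only [Lmat, Matrix.of_apply]
    rw [if_neg]
    exact fun hc => absurd (Fin.lt_iff_val_lt_val.mp h) (by omega)

/-- The elementary column-operation matrix. -/
noncomputable def Emat : Matrix (Fin (d + 1)) (Fin (d + 1)) ℂ :=
  Matrix.of fun m j => (if m = j then (1 : ℂ) else 0)
    + (if m = Fin.last d ∧ j ≠ Fin.last d then (-1 : ℂ) else 0)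

lemma det_Emat : (Emat d).det = 1 := by
  rw [Matrix.det_of_lowerTriangular]
  · simp [Emat]
  · intro i j hij
    have h : i < j := hij
    simp only [Emat, Matrix.of_apply]
    rw [if_neg (ne_of_lt h), if_neg]
    · ring
    rintro ⟨h1, -⟩
    subst h1
    exact absurd h (not_lt.mpr (Fin.le_last j))

noncomputable def Vmat : Matrix (Fin (d + 1)) (Fin (d + 1)) ℂ :=
  Matrix.of fun r j => w j ^ (r : ℕ)

noncomputable def Vmat' : Matrix (Fin (d + 1)) (Fin (d + 1)) ℂ :=
  Matrix.of fun r j =>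
    if j = Fin.last d then w (Fin.last d) ^ (r : ℕ) else w j ^ (r : ℕ) - w (Fin.last d) ^ (r : ℕ)

lemma Vmat_mul_Emat : Vmat d w * Emat d = Vmat' d w := by
  ext r j
  simp only [Matrix.mul_apply, Vmat, Emat, Vmat', Matrix.of_apply]
  by_cases hj : j = Fin.last d <;>
    simp [hj, mul_add, Finset.sum_add_distrib, mul_ite, Finset.sum_ite_eq',
      sub_eq_add_neg]

lemma det_Vmat : (Vmat d w).det = (Matrix.vandermonde w).det := by
  rw [← Matrix.det_transpose (Matrix.vandermonde w)]
  have h : Vmat d w = (Matrix.vandermonde w).transpose := by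
    ext r j
    simp [Vmat, Matrix.vandermonde_apply, Matrix.transpose_apply]
  rw [h]

lemma det_Vmat' : (Vmat' d w).det = (-1) ^ d * (Bmat d w).det := by
  rw [Matrix.det_succ_row_zero]
  rw [Finset.sum_eq_single (Fin.last d)]
  · have h1 : (Vmat' d w) 0 (Fin.last d) = 1 := by simp [Vmat']
    rw [h1, mul_one, Fin.val_last]
    have h2 : (Vmat' d w).submatrix Fin.succ (Fin.last d).succAbove = Bmat d w := by
      ext r l
      simp only [Matrix.submatrix_apply, Fin.succAbove_last, Vmat', Bmat, Matrix.of_apply]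
      rw [if_neg (Fin.castSucc_lt_last l).ne]
      simp [Fin.val_succ]
    rw [h2]
  · intro j _ hj
    have : (Vmat' d w) 0 j = 0 := by
      simp only [Vmat', Matrix.of_apply, if_neg hj]
      norm_num
    rw [this]; ring
  · simp

lemma det_Bmat : (Bmat d w).det
    = (-1) ^ d * ∏ i : Fin (d + 1), ∏ j ∈ Finset.Ioi i, (w j - w i) := by
  have h1 : (Vmat' d w).det = (Vmat d w).det := by
    rw [← Vmat_mul_Emat, Matrix.det_mul, det_Emat, mul_one]
  have h2 := det_Vmat' d w
  have h3 := det_Vmat d w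
  have h4 : ((-1 : ℂ) ^ d) * ((-1 : ℂ) ^ d) = 1 := by
    rw [← mul_pow]; norm_num
  have h5 := Matrix.det_vandermonde w
  calc (Bmat d w).det = ((-1:ℂ)^d * (-1:ℂ)^d) * (Bmat d w).det := by rw [h4, one_mul]
    _ = (-1:ℂ)^d * ((Vmat' d w).det) := by rw [h2]; ring
    _ = (-1:ℂ)^d * ∏ i : Fin (d + 1), ∏ j ∈ Finset.Ioi i, (w j - w i) := by
        rw [h1, h3, h5]

lemma Mmat_eq : (Matrix.of fun k l : Fin d =>
      w (Fin.castSucc l) * esm w (Finset.univ.erase (Fin.castSucc l)) (k : ℕ)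
        - w (Fin.last d) * esm w (Finset.univ.erase (Fin.last d)) (k : ℕ))
    = Lmat d w * Bmat d w := by
  ext k l
  rw [Matrix.mul_apply]
  set F : ℕ → ℂ := fun r =>
    (if r ≤ (k : ℕ) then (-1) ^ r * esm w Finset.univ ((k : ℕ) - r) else 0) *
      (w (Fin.castSucc l) ^ (r + 1) - w (Fin.last d) ^ (r + 1)) with hF
  have h0 : ∀ r : Fin d, Lmat d w k r * Bmat d w r l = F (r : ℕ) := fun r => rfl
  rw [Finset.sum_congr rfl fun r _ => h0 r, Fin.sum_univ_eq_sum_range F d]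
  have hsub : Finset.range ((k : ℕ) + 1) ⊆ Finset.range d :=
    Finset.range_subset_range.mpr k.isLt
  rw [← Finset.sum_subset hsub (fun r _ hr => by
    have : ¬ r ≤ (k : ℕ) := by simpa using hr
    simp [hF, this])]
  have hpt : ∀ r ∈ Finset.range ((k : ℕ) + 1),
      F r = (-1) ^ r * esm w Finset.univ ((k : ℕ) - r) * w (Fin.castSucc l) ^ (r + 1)
        - (-1) ^ r * esm w Finset.univ ((k : ℕ) - r) * w (Fin.last d) ^ (r + 1) := by
    intro r hr
    rw [hF]
    simp only [if_pos (Nat.lt_succ_iff.mp (Finset.mem_range.mp hr))]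
    ring
  rw [Finset.sum_congr rfl hpt, Finset.sum_sub_distrib, Matrix.of_apply,
    mul_esm_erase, mul_esm_erase]

lemma sign_identity :
    (∏ k : Fin d, (-1 : ℂ) ^ (k : ℕ)) * (-1) ^ d
      = ∏ i : Fin (d + 1), (-1 : ℂ) ^ (d - (i : ℕ)) := by
  rw [Finset.prod_pow_eq_pow_sum, Finset.prod_pow_eq_pow_sum, ← pow_add]
  congr 1
  rw [Fin.sum_univ_eq_sum_range (fun i => i) d, Fin.sum_univ_eq_sum_range (fun i => d - i) (d + 1)]
  have := Finset.sum_range_reflect (fun i => i) (d + 1)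
  simp only [Nat.add_sub_cancel] at this
  rw [this, Finset.sum_range_succ]

lemma det_Mmat : (Matrix.of fun k l : Fin d =>
      w (Fin.castSucc l) * esm w (Finset.univ.erase (Fin.castSucc l)) (k : ℕ)
        - w (Fin.last d) * esm w (Finset.univ.erase (Fin.last d)) (k : ℕ)).det
    = ∏ p ∈ Finset.univ.filter (fun p : Fin (d + 1) × Fin (d + 1) => p.1 < p.2),
        (w p.1 - w p.2) := by
  rw [Mmat_eq, Matrix.det_mul, det_Lmat, det_Bmat, prod_pairs (fun i j => w i - w j)]
  have hq : ∀ i : Fin (d + 1), ∏ j ∈ Finset.Ioi i, (w i - w j)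
      = (-1 : ℂ) ^ (d - (i : ℕ)) * ∏ j ∈ Finset.Ioi i, (w j - w i) := by
    intro i
    have hcard : (Finset.Ioi i).card = d - (i : ℕ) := by rw [Fin.card_Ioi]; omega
    rw [← hcard, ← Finset.prod_const (-1 : ℂ), ← Finset.prod_mul_distrib]
    exact Finset.prod_congr rfl fun j _ => by ring
  rw [Finset.prod_congr rfl fun i _ => hq i, Finset.prod_mul_distrib, ← sign_identity]
  ring

end Det

noncomputable def tcoord (d : ℕ) (j : Fin (d + 1)) : (Fin d → ℝ) →L[ℝ] ℝ :=
  if h : j = Fin.last d then -(∑ i, ContinuousLinearMap.proj i)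
  else ContinuousLinearMap.proj (j.castPred h)

lemma tcoord_apply (d : ℕ) (j : Fin (d + 1)) (u : Fin d → ℝ) :
    tcoord d j u = (Fin.snoc u (-(∑ i, u i)) : Fin (d+1) → ℝ) j := by
  by_cases h : j = Fin.last d
  · subst h
    simp [tcoord, Fin.snoc_last, ContinuousLinearMap.sum_apply]
  · rw [tcoord, dif_neg h]
    conv_rhs => rw [← Fin.castSucc_castPred j h, Fin.snoc_castSucc]
    rfl

lemma tcoord_single (d : ℕ) (j : Fin (d + 1)) (l : Fin d) :
    tcoord d j (Pi.single l 1)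
      = (if j = Fin.castSucc l then (1:ℝ) else 0) + (if j = Fin.last d then (-1:ℝ) else 0) := by
  by_cases h : j = Fin.last d
  · subst h
    rw [tcoord, dif_pos rfl]
    have : ∀ l' : Fin d, Fin.last d ≠ Fin.castSucc l' := fun l' => (Fin.castSucc_lt_last l').ne'
    simp [ContinuousLinearMap.sum_apply, Finset.sum_pi_single, this l]
  · rw [tcoord, dif_neg h, if_neg h]
    by_cases hl : j = Fin.castSucc l
    · subst hl
      simp [Fin.castPred_castSucc, Pi.single_apply]
    · have : (Fin.castPred j h) ≠ l := by
        intro hc; exact hl (by rw [← hc, Fin.castSucc_castPred])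
      simp [Pi.single_apply, this, hl]

noncomputable def GJ (d : ℕ) (J : Finset (Fin (d + 1))) : (Fin d → ℝ) →L[ℝ] ℝ :=
  ∑ j ∈ J, tcoord d j

lemma GJ_apply (d : ℕ) (J : Finset (Fin (d + 1))) (u : Fin d → ℝ) :
    GJ d J u = ∑ j ∈ J, (Fin.snoc u (-(∑ i, u i)) : Fin (d + 1) → ℝ) j := by
  rw [GJ, ContinuousLinearMap.sum_apply]
  exact Finset.sum_congr rfl fun j _ => tcoord_apply d j u

lemma zFun_hasFDerivAt (d : ℕ) (k : Fin d) (s : Fin d → ℝ) :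
    HasFDerivAt (zFun d k)
      ((1 / (Nat.choose (d + 1) ((k : ℕ) + 1) : ℂ)) •
        ∑ J ∈ (Finset.univ : Finset (Fin (d + 1))).powersetCard ((k : ℕ) + 1),
          (Complex.exp (2 * π * Complex.I * (GJ d J s : ℂ)) * (2 * π * Complex.I)) •
            (Complex.ofRealCLM.comp (GJ d J))) s := by
  have hterm : ∀ J ∈ (Finset.univ : Finset (Fin (d + 1))).powersetCard ((k : ℕ) + 1),
      HasFDerivAt (fun u : Fin d → ℝ =>
          Complex.exp (2 * π * Complex.I *
            ((∑ j ∈ J, (Fin.snoc u (-(∑ i, u i)) : Fin (d + 1) → ℝ) j : ℝ) : ℂ)))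
        ((Complex.exp (2 * π * Complex.I * (GJ d J s : ℂ)) * (2 * π * Complex.I)) •
          (Complex.ofRealCLM.comp (GJ d J))) s := by
    intro J _
    have hinner : HasFDerivAt (fun u : Fin d → ℝ => ((GJ d J u : ℝ) : ℂ))
        (Complex.ofRealCLM.comp (GJ d J)) s :=
      Complex.ofRealCLM.hasFDerivAt.comp s (GJ d J).hasFDerivAt
    have houter : HasDerivAt (fun z : ℂ => Complex.exp (2 * π * Complex.I * z))
        (Complex.exp (2 * π * Complex.I * (GJ d J s : ℂ)) * (2 * π * Complex.I))
        ((GJ d J s : ℝ) : ℂ) := by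
      simpa using ((hasDerivAt_id ((GJ d J s : ℝ) : ℂ)).const_mul (2 * π * Complex.I)).cexp
    have := houter.comp_hasFDerivAt s hinner
    refine this.congr_of_eventuallyEq (Filter.Eventually.of_forall fun u => ?_)
    simp only [Function.comp_apply, GJ_apply]
  have hs := HasFDerivAt.sum hterm
  have := hs.const_mul (1 / (Nat.choose (d + 1) ((k : ℕ) + 1) : ℂ))
  refine this.congr_of_eventuallyEq (Filter.Eventually.of_forall fun u => ?_)
  simp only [Finset.sum_apply]
  rfl

noncomputable def wv (d : ℕ) (s : Fin d → ℝ) (j : Fin (d + 1)) : ℂ :=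
  Complex.exp (2 * π * Complex.I * (((Fin.snoc s (-(∑ i, s i)) : Fin (d + 1) → ℝ) j : ℝ) : ℂ))

lemma exp_GJ (d : ℕ) (s : Fin d → ℝ) (J : Finset (Fin (d + 1))) :
    Complex.exp (2 * π * Complex.I * (GJ d J s : ℂ)) = ∏ j ∈ J, wv d s j := by
  rw [GJ_apply, Complex.ofReal_sum, Finset.mul_sum, Complex.exp_sum]
  rfl

lemma entry_eq (d : ℕ) (k l : Fin d) (s : Fin d → ℝ) :
    fderiv ℝ (fun u : Fin d → ℝ => zFun d k u) s (Pi.single l 1)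
      = (2 * π * Complex.I / (Nat.choose (d + 1) ((k : ℕ) + 1) : ℂ)) *
        (wv d s (Fin.castSucc l) * esm (wv d s) (Finset.univ.erase (Fin.castSucc l)) (k : ℕ)
          - wv d s (Fin.last d) * esm (wv d s) (Finset.univ.erase (Fin.last d)) (k : ℕ)) := by
  rw [(zFun_hasFDerivAt d k s).fderiv]
  rw [ContinuousLinearMap.smul_apply, ContinuousLinearMap.sum_apply]
  simp only [ContinuousLinearMap.smul_apply, ContinuousLinearMap.comp_apply,
    Complex.ofRealCLM_apply, smul_eq_mul]
  have hGJ : ∀ J : Finset (Fin (d + 1)), (GJ d J (Pi.single l 1) : ℂ)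
      = (if Fin.castSucc l ∈ J then (1:ℂ) else 0) - (if Fin.last d ∈ J then (1:ℂ) else 0) := by
    intro J
    have : GJ d J (Pi.single l 1)
        = (if Fin.castSucc l ∈ J then (1:ℝ) else 0) + (if Fin.last d ∈ J then (-1:ℝ) else 0) := by
      rw [GJ, ContinuousLinearMap.sum_apply,
        Finset.sum_congr rfl fun j _ => tcoord_single d j l, Finset.sum_add_distrib,
        Finset.sum_ite_eq' J (Fin.castSucc l) (fun _ => (1:ℝ)),
        Finset.sum_ite_eq' J (Fin.last d) (fun _ => (-1:ℝ))]
    rw [this]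
    push_cast [apply_ite (fun x : ℝ => (x : ℂ))]
    split_ifs <;> ring
  have hsum : ∑ J ∈ (Finset.univ : Finset (Fin (d + 1))).powersetCard ((k : ℕ) + 1),
      Complex.exp (2 * π * Complex.I * (GJ d J s : ℂ)) * (2 * π * Complex.I) *
        (GJ d J (Pi.single l 1) : ℂ)
      = (2 * π * Complex.I) *
        (wv d s (Fin.castSucc l) * esm (wv d s) (Finset.univ.erase (Fin.castSucc l)) (k : ℕ)
          - wv d s (Fin.last d) * esm (wv d s) (Finset.univ.erase (Fin.last d)) (k : ℕ)) := by
    rw [← sum_indicator (wv d s) (Fin.castSucc l) (k : ℕ),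
      ← sum_indicator (wv d s) (Fin.last d) (k : ℕ), ← Finset.sum_sub_distrib, Finset.mul_sum]
    refine Finset.sum_congr rfl fun J _ => ?_
    rw [hGJ J, exp_GJ]
    ring
  rw [hsum]
  ring

end JacAux

open JacAux in
/-- The Jacobian determinant of `(z_1, …, z_d)` with respect to `(t_1, …, t_d)`:
`det[∂z/∂t] = ∏_{k=1}^d (2πi / C(d+1,k)) ⬝ ∏_{μ<ν} (e^{2πi t_μ} - e^{2πi t_ν})`. -/
theorem jacobian_z (d : ℕ) (s : Fin d → ℝ) :
    Matrix.det (Matrix.of fun k l : Fin d =>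
        fderiv ℝ (fun u : Fin d → ℝ => zFun d k u) s (Pi.single l 1)) =
      (∏ k : Fin d, 2 * π * Complex.I / (Nat.choose (d + 1) ((k : ℕ) + 1) : ℂ)) *
        ∏ p ∈ Finset.univ.filter (fun p : Fin (d + 1) × Fin (d + 1) => p.1 < p.2),
          (Complex.exp (2 * π * Complex.I *
              ((Fin.snoc s (-(∑ i, s i)) : Fin (d + 1) → ℝ) p.1 : ℂ)) -
            Complex.exp (2 * π * Complex.I *
              ((Fin.snoc s (-(∑ i, s i)) : Fin (d + 1) → ℝ) p.2 : ℂ))) := by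
  have hent : (Matrix.of fun k l : Fin d =>
      fderiv ℝ (fun u : Fin d → ℝ => zFun d k u) s (Pi.single l 1))
      = Matrix.of (fun k l : Fin d =>
          (fun k' : Fin d => 2 * π * Complex.I / (Nat.choose (d + 1) ((k' : ℕ) + 1) : ℂ)) k *
          (Matrix.of fun k' l' : Fin d =>
            wv d s (Fin.castSucc l') * esm (wv d s) (Finset.univ.erase (Fin.castSucc l')) (k' : ℕ)
              - wv d s (Fin.last d) * esm (wv d s) (Finset.univ.erase (Fin.last d)) (k' : ℕ))
            k l) := by
    ext k l
    exact entry_eq d k l s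
  rw [hent, Matrix.det_mul_column, det_Mmat d (wv d s)]
  rfl
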